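/- Let G be a finite simple graph with vertex set V. For every matching M on G there exists a regal matching M̂ on the crown Crown(G) whose circlet–circlet edges are exactly the circlet copies of the edges of M. -/

import Mathlib

/-- A vertex `v` is matched by the edge set `M` if it is an endpoint of some edge of `M`. -/
def Matched {V : Type*} (M : Set (Sym2 V)) (v : V) : Prop := ∃ e ∈ M, v ∈ e

/-- `M` is a matching on `G`: a set of edges of `G`, no two of which share a vertex. -/
def IsMatching {V : Type*} (G : SimpleGraph V) (M : Set (Sym2 V)) : Prop :=
  M ⊆ G.edgeSet ∧ ∀ e ∈ M, ∀ f ∈ M, e ≠ f → ∀ v : V, v ∈ e → v ∉ f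

/-- The crown of `G`: three disjoint copies of the vertex set of `G` — the circlet
(`Sum.inl`), the arches (`Sum.inr ∘ Sum.inl`) and the monde (`Sum.inr ∘ Sum.inr`).  Two
circlet vertices are adjacent iff the corresponding vertices are adjacent in `G`; each
circlet vertex is adjacent to its own arch copy; every arch vertex is adjacent to every
monde vertex; there are no other edges. -/
def crown {V : Type*} (G : SimpleGraph V) : SimpleGraph (V ⊕ V ⊕ V) where
  Adj x y :=
    match x, y with
    | Sum.inl u, Sum.inl w => G.Adj u w
    | Sum.inl u, Sum.inr (Sum.inl w) => u = w
    | Sum.inr (Sum.inl u), Sum.inl w => u = w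
    | Sum.inr (Sum.inl _), Sum.inr (Sum.inr _) => True
    | Sum.inr (Sum.inr _), Sum.inr (Sum.inl _) => True
    | _, _ => False
  symm := by
    constructor
    rintro (u | u | u) (w | w | w) h <;>
      first
        | exact G.adj_symm h
        | exact Eq.symm h
        | exact False.elim h
        | trivial
  loopless := by
    constructor
    rintro (u | u | u) h
    · exact G.irrefl h
    · exact False.elim h
    · exact False.elim h

/-- A matching on the crown is regal if every circlet vertex and every arch vertex is
matched. -/
def IsRegal {V : Type*} (Mh : Set (Sym2 (V ⊕ V ⊕ V))) : Prop :=
  (∀ u : V, Matched Mh (Sum.inl u)) ∧ (∀ u : V, Matched Mh (Sum.inr (Sum.inl u)))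

theorem crown_regal_extension {V : Type*} [Fintype V] (G : SimpleGraph V)
    (M : Set (Sym2 V)) (hM : IsMatching G M) :
    ∃ Mh : Set (Sym2 (V ⊕ V ⊕ V)), IsMatching (crown G) Mh ∧ IsRegal Mh ∧
      ∀ u w : V, (s(Sum.inl u, Sum.inl w) ∈ Mh ↔ s(u, w) ∈ M) := by
  classical
  refine ⟨(Sym2.map Sum.inl '' M) ∪
      ((fun u => s(Sum.inl u, Sum.inr (Sum.inl u))) '' {u | ¬ Matched M u}) ∪
      ((fun u => s(Sum.inr (Sum.inl u), Sum.inr (Sum.inr u))) '' {u | Matched M u}),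
    ⟨?_, ?_⟩, ⟨?_, ?_⟩, ?_⟩
  · rintro e ((⟨e', he', rfl⟩ | ⟨u, hu, rfl⟩) | ⟨u, hu, rfl⟩)
    · induction e' using Sym2.ind with
      | _ a b =>
        have : G.Adj a b := hM.1 he'
        rw [Sym2.map_pair_eq, SimpleGraph.mem_edgeSet]
        exact this
    · rw [SimpleGraph.mem_edgeSet]; rfl
    · rw [SimpleGraph.mem_edgeSet]; trivial
  · rintro e ((⟨e', he', rfl⟩ | ⟨u, hu, rfl⟩) | ⟨u, hu, rfl⟩) f
      ((⟨f', hf', rfl⟩ | ⟨w, hw, rfl⟩) | ⟨w, hw, rfl⟩) hne v hv hv'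
    · have hef : e' ≠ f' := fun h => hne (by rw [h])
      obtain ⟨x, hx, rfl⟩ := Sym2.mem_map.1 hv
      obtain ⟨y, hy, hxy⟩ := Sym2.mem_map.1 hv'
      exact hM.2 e' he' f' hf' hef x hx (Sum.inl_injective hxy ▸ hy)
    · obtain ⟨x, hx, rfl⟩ := Sym2.mem_map.1 hv
      rcases Sym2.mem_iff.1 hv' with h | h
      · cases Sum.inl_injective h
        exact hw ⟨e', he', hx⟩
      · exact Sum.inl_ne_inr h
    · obtain ⟨x, hx, rfl⟩ := Sym2.mem_map.1 hv
      rcases Sym2.mem_iff.1 hv' with h | h <;> exact Sum.inl_ne_inr h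
    · obtain ⟨y, hy, hxy⟩ := Sym2.mem_map.1 hv'
      rcases Sym2.mem_iff.1 hv with h | h
      · subst h; cases Sum.inl_injective hxy.symm; exact hu ⟨f', hf', hy⟩
      · subst h; exact Sum.inl_ne_inr hxy
    · rcases Sym2.mem_iff.1 hv with h | h <;> rcases Sym2.mem_iff.1 hv' with h' | h' <;>
        subst h <;> first
        | (cases Sum.inl_injective h'; exact hne rfl)
        | (cases Sum.inl_injective (Sum.inr_injective h'); exact hne rfl)
        | exact Sum.inl_ne_inr h'
        | exact Sum.inl_ne_inr h'.symm
        | exact Sum.inl_ne_inr (Sum.inr_injective h')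
        | exact Sum.inl_ne_inr (Sum.inr_injective h').symm
    · rcases Sym2.mem_iff.1 hv with h | h <;> rcases Sym2.mem_iff.1 hv' with h' | h' <;>
        subst h <;> first
        | exact Sum.inl_ne_inr h'
        | exact Sum.inl_ne_inr (Sum.inr_injective h')
        | exact Sum.inl_ne_inr (Sum.inr_injective h').symm
        | (cases Sum.inl_injective (Sum.inr_injective h'); exact hw hu)
        | (cases Sum.inl_injective (Sum.inr_injective h'); exact hu hw)
    · obtain ⟨y, hy, hxy⟩ := Sym2.mem_map.1 hv'
      rcases Sym2.mem_iff.1 hv with h | h <;> subst h <;> exact Sum.inl_ne_inr hxy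
    · rcases Sym2.mem_iff.1 hv with h | h <;> rcases Sym2.mem_iff.1 hv' with h' | h' <;>
        subst h <;> first
        | exact Sum.inl_ne_inr h'.symm
        | exact Sum.inl_ne_inr (Sum.inr_injective h')
        | exact Sum.inl_ne_inr (Sum.inr_injective h').symm
        | (cases Sum.inl_injective (Sum.inr_injective h'); exact hw hu)
        | (cases Sum.inl_injective (Sum.inr_injective h'); exact hu hw)
    · rcases Sym2.mem_iff.1 hv with h | h <;> rcases Sym2.mem_iff.1 hv' with h' | h' <;>
        subst h <;> first
        | (cases Sum.inl_injective (Sum.inr_injective h'); exact hne rfl)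
        | (cases Sum.inr_injective (Sum.inr_injective h'); exact hne rfl)
        | exact Sum.inl_ne_inr (Sum.inr_injective h')
        | exact Sum.inl_ne_inr (Sum.inr_injective h').symm
  · intro u
    by_cases hu : Matched M u
    · obtain ⟨e, he, hue⟩ := hu
      exact ⟨Sym2.map Sum.inl e, Or.inl (Or.inl ⟨e, he, rfl⟩),
        Sym2.mem_map.2 ⟨u, hue, rfl⟩⟩
    · exact ⟨s(Sum.inl u, Sum.inr (Sum.inl u)), Or.inl (Or.inr ⟨u, hu, rfl⟩),
        Sym2.mem_iff.2 (Or.inl rfl)⟩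
  · intro u
    by_cases hu : Matched M u
    · exact ⟨s(Sum.inr (Sum.inl u), Sum.inr (Sum.inr u)), Or.inr ⟨u, hu, rfl⟩,
        Sym2.mem_iff.2 (Or.inl rfl)⟩
    · exact ⟨s(Sum.inl u, Sum.inr (Sum.inl u)), Or.inl (Or.inr ⟨u, hu, rfl⟩),
        Sym2.mem_iff.2 (Or.inr rfl)⟩
  · intro u w
    constructor
    · rintro ((⟨e', he', he⟩ | ⟨x, hx, he⟩) | ⟨x, hx, he⟩)
      · have : e' = s(u, w) := Sym2.map.injective Sum.inl_injective (by simpa using he)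
        exact this ▸ he'
      · rcases Sym2.eq_iff.1 he with ⟨h1, h2⟩ | ⟨h1, h2⟩ <;>
          first
          | exact absurd h2 (Ne.symm (Sum.inl_ne_inr ·)).elim
          | exact absurd h2.symm Sum.inl_ne_inr
          | exact absurd h1.symm Sum.inl_ne_inr
      · rcases Sym2.eq_iff.1 he with ⟨h1, h2⟩ | ⟨h1, h2⟩ <;>
          exact absurd h1.symm Sum.inl_ne_inr
    · intro h
      exact Or.inl (Or.inl ⟨s(u, w), h, rfl⟩)
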